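/- arXiv:1006.0491 — 2 statements merged into one kernel-verified Lean document; each statement's English description precedes it below -/
import Mathlib

section
/- Let H be a Hilbert space and (u_n) a bounded sequence in H. If the averages (1/N)·Σ_{n=1}^N u_n do not converge to 0 in norm as N→∞, then the scalar averages (1/M)·Σ_{m=1}^M (1/N)·Σ_{n=1}^N ⟨u_n, u_{n+m}⟩ do not converge to 0 as N→∞ and then M→∞ (i.e., it is not the case that for every ε>0 there exists M₀ such that for all M≥M₀, limsup_{N→∞} |(1/M)Σ_{m=1}^M (1/N)Σ_{n=1}^N ⟨u_n,u_{n+m}⟩| < ε). -/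
open Filter MeasureTheory
open scoped RealInnerProductSpace

private lemma vdc_shift {E : Type*} [SeminormedAddCommGroup E] (f : ℕ → E) (K : ℝ)
    (hK : ∀ j, ‖f j‖ ≤ K) (N m : ℕ) :
    ‖(∑ n ∈ Finset.Icc 1 N, f (n + m)) - ∑ n ∈ Finset.Icc 1 N, f n‖ ≤ 2 * m * K := by
  have hIcc : ∀ g : ℕ → E, ∑ n ∈ Finset.Icc 1 N, g n = ∑ i ∈ Finset.range N, g (1 + i) := by
    intro g
    rw [← Finset.Ico_add_one_right_eq_Icc, Finset.sum_Ico_eq_sum_range]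
    simp
  have e3 : ∑ i ∈ Finset.Ico m (N + m), f (1 + i) = ∑ i ∈ Finset.range N, f (1 + (m + i)) := by
    rw [Finset.sum_Ico_eq_sum_range, show N + m - m = N from by omega]
  have e1 : (∑ i ∈ Finset.range N, f (1 + i)) + ∑ i ∈ Finset.Ico N (N + m), f (1 + i)
      = ∑ i ∈ Finset.range (N + m), f (1 + i) :=
    Finset.sum_range_add_sum_Ico _ (Nat.le_add_right N m)
  have e2 : (∑ i ∈ Finset.range m, f (1 + i)) + ∑ i ∈ Finset.Ico m (N + m), f (1 + i)
      = ∑ i ∈ Finset.range (N + m), f (1 + i) :=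
    Finset.sum_range_add_sum_Ico _ (Nat.le_add_left m N)
  have key : (∑ n ∈ Finset.Icc 1 N, f (n + m)) - ∑ n ∈ Finset.Icc 1 N, f n
      = (∑ i ∈ Finset.Ico N (N + m), f (1 + i)) - ∑ i ∈ Finset.range m, f (1 + i) := by
    rw [hIcc (fun n => f (n + m)), hIcc f]
    have h4 : ∑ i ∈ Finset.range N, f (1 + i + m) = ∑ i ∈ Finset.range N, f (1 + (m + i)) :=
      Finset.sum_congr rfl fun i _ => congrArg f (by omega)
    rw [h4, ← e3]
    have := e1
    have := e2
    -- Σ_{Ico m (N+m)} - Σ_{range N} = Σ_{Ico N (N+m)} - Σ_{range m}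
    linear_combination (norm := abel) e2 - e1
  rw [key]
  have b1 : ‖∑ i ∈ Finset.Ico N (N + m), f (1 + i)‖ ≤ (m : ℝ) * K := by
    calc ‖∑ i ∈ Finset.Ico N (N + m), f (1 + i)‖ ≤ ∑ i ∈ Finset.Ico N (N + m), K :=
          norm_sum_le_of_le _ fun i _ => hK _
      _ = (m : ℝ) * K := by simp [Finset.sum_const, mul_comm]
  have b2 : ‖∑ i ∈ Finset.range m, f (1 + i)‖ ≤ (m : ℝ) * K := by
    calc ‖∑ i ∈ Finset.range m, f (1 + i)‖ ≤ ∑ i ∈ Finset.range m, K :=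
          norm_sum_le_of_le _ fun i _ => hK _
      _ = (m : ℝ) * K := by simp [Finset.sum_const, mul_comm]
  calc ‖_ - _‖ ≤ ‖∑ i ∈ Finset.Ico N (N + m), f (1 + i)‖ + ‖∑ i ∈ Finset.range m, f (1 + i)‖ :=
        norm_sub_le _ _
    _ ≤ (m : ℝ) * K + (m : ℝ) * K := add_le_add b1 b2
    _ = 2 * m * K := by ring

private lemma vdc_avg (g : ℕ → ℝ) (K : ℝ) (hK : 0 ≤ K) (hg : ∀ n, |g n| ≤ K) (N : ℕ) :
    |(N : ℝ)⁻¹ * ∑ n ∈ Finset.Icc 1 N, g n| ≤ K := by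
  rcases Nat.eq_zero_or_pos N with rfl | hN
  · simpa using hK
  · have hN' : (0 : ℝ) < N := by exact_mod_cast hN
    have h1 : |∑ n ∈ Finset.Icc 1 N, g n| ≤ (N : ℝ) * K := by
      calc |∑ n ∈ Finset.Icc 1 N, g n| ≤ ∑ n ∈ Finset.Icc 1 N, |g n| :=
            Finset.abs_sum_le_sum_abs _ _
        _ ≤ ∑ n ∈ Finset.Icc 1 N, K := Finset.sum_le_sum fun i _ => hg i
        _ = (N : ℝ) * K := by simp [Finset.sum_const, Nat.card_Icc]
    rw [abs_mul, abs_inv, Nat.abs_cast]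
    calc (N : ℝ)⁻¹ * |∑ n ∈ Finset.Icc 1 N, g n| ≤ (N : ℝ)⁻¹ * ((N : ℝ) * K) := by
          gcongr
      _ = K := by field_simp
set_option maxHeartbeats 1000000 in
/-- **Van der Corput estimate.** If the averages of a bounded sequence in a Hilbert
space do not converge to `0` in norm, then the iterated scalar averages of inner
products do not converge to `0` as `N → ∞` and then `M → ∞`. -/
theorem vanDerCorput_estimate {H : Type*} [NormedAddCommGroup H]
    [InnerProductSpace ℝ H] [CompleteSpace H]
    (u : ℕ → H) (hbdd : ∃ C : ℝ, ∀ n, ‖u n‖ ≤ C)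
    (h : ¬ Tendsto (fun N : ℕ => (N : ℝ)⁻¹ • ∑ n ∈ Finset.Icc 1 N, u n) atTop (nhds 0)) :
    ¬ (∀ ε : ℝ, 0 < ε → ∃ M₀ : ℕ, ∀ M ≥ M₀,
        Filter.limsup (fun N : ℕ =>
          |(M : ℝ)⁻¹ * ∑ m ∈ Finset.Icc 1 M,
            (N : ℝ)⁻¹ * ∑ n ∈ Finset.Icc 1 N, ⟪u n, u (n + m)⟫|) atTop < ε) := by
  obtain ⟨C₀, hC₀⟩ := hbdd
  set C : ℝ := max C₀ 0 with hCdef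
  have hC : ∀ n, ‖u n‖ ≤ C := fun n => (hC₀ n).trans (le_max_left _ _)
  have hC0 : 0 ≤ C := le_max_right _ _
  have hCC0 : 0 ≤ C * C := mul_nonneg hC0 hC0
  have hinner : ∀ a b : ℕ, |⟪u a, u b⟫| ≤ C * C := fun a b =>
    (abs_real_inner_le_norm _ _).trans (mul_le_mul (hC a) (hC b) (norm_nonneg _) hC0)
  intro P
  apply h
  rw [NormedAddCommGroup.tendsto_nhds_zero]
  intro ε' hε'
  set γ : ℕ → ℕ → ℝ := fun N d => (N : ℝ)⁻¹ * ∑ n ∈ Finset.Icc 1 N, ⟪u n, u (n + d)⟫ with hγdef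
  set b : ℕ → ℕ → ℝ := fun M N => (M : ℝ)⁻¹ * ∑ m ∈ Finset.Icc 1 M, γ N m with hbdef
  have hγbd : ∀ N d, |γ N d| ≤ C * C := fun N d =>
    vdc_avg _ _ hCC0 (fun n => hinner _ _) N
  have hbbd : ∀ M N, |b M N| ≤ C * C := fun M N =>
    vdc_avg _ _ hCC0 (fun m => hγbd N m) M
  set ε : ℝ := ε' ^ 2 / 32 with hεdef
  have hε : 0 < ε := by positivity
  obtain ⟨M₀, hM₀⟩ := P ε hε
  obtain ⟨M, hMge⟩ := exists_nat_ge ((C * C + 2 * M₀ * (C * C)) / ε + (M₀ + 1))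
  have hdivnn : 0 ≤ (C * C + 2 * M₀ * (C * C)) / ε := by positivity
  have hMM₀R : (M₀ : ℝ) + 1 ≤ M := by linarith
  have hMM₀ : M₀ < M := by exact_mod_cast (by linarith : (M₀ : ℝ) < M)
  have hM1 : 1 ≤ M := by omega
  have hMR : (1 : ℝ) ≤ (M : ℝ) := by exact_mod_cast hM1
  have hMR0 : (0 : ℝ) < (M : ℝ) := by linarith
  have hc : C * C ≤ ε * M := by
    have := (div_le_iff₀ hε).mp (by linarith : (C * C + 2 * M₀ * (C * C)) / ε ≤ (M : ℝ))
    nlinarith [mul_nonneg (Nat.cast_nonneg (α := ℝ) M₀) hCC0]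
  have hd : 2 * M₀ * (C * C) ≤ ε * M := by
    have := (div_le_iff₀ hε).mp (by linarith : (C * C + 2 * M₀ * (C * C)) / ε ≤ (M : ℝ))
    nlinarith
  -- eventual facts
  have hev1 : ∀ᶠ N : ℕ in atTop, ∀ k ∈ Finset.Icc M₀ M, |b k N| < ε := by
    rw [Filter.eventually_all_finset]
    intro k hk
    exact Filter.eventually_lt_of_limsup_lt (hM₀ k (Finset.mem_Icc.mp hk).1)
      (Filter.isBoundedUnder_of ⟨C * C, fun N => hbbd k N⟩)
  have hev2 : ∀ᶠ N : ℕ in atTop, (4 * M * (C * C)) / (ε' ^ 2 / 8) ≤ (N : ℝ) :=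
    tendsto_natCast_atTop_atTop.eventually_ge_atTop _
  have hev3 : ∀ᶠ N : ℕ in atTop, (2 * M * C) / (ε' / 4) ≤ (N : ℝ) :=
    tendsto_natCast_atTop_atTop.eventually_ge_atTop _
  filter_upwards [hev1, hev2, hev3, Filter.eventually_ge_atTop 1] with N h1 h2 h3 hN1
  have hNR : (1 : ℝ) ≤ (N : ℝ) := by exact_mod_cast hN1
  have hNR0 : (0 : ℝ) < (N : ℝ) := by linarith
  have hNinv0 : (0 : ℝ) ≤ (N : ℝ)⁻¹ := by positivity
  set B : ℕ → H := fun k => (M : ℝ)⁻¹ • ∑ m ∈ Finset.Icc 1 M, u (k + m) with hBdef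
  set R : ℕ → ℕ → ℝ :=
    fun m m' => (N : ℝ)⁻¹ * ∑ k ∈ Finset.Icc 1 N, ⟪u (k + m), u (k + m')⟫ with hRdef
  -- Step A
  have hSdiff : ‖(∑ k ∈ Finset.Icc 1 N, u k) - ∑ k ∈ Finset.Icc 1 N, B k‖ ≤ 2 * M * C := by
    have h1 : ∑ k ∈ Finset.Icc 1 N, B k
        = (M : ℝ)⁻¹ • ∑ m ∈ Finset.Icc 1 M, ∑ k ∈ Finset.Icc 1 N, u (k + m) := by
      rw [← Finset.smul_sum, Finset.sum_comm]
    have h2 : (∑ k ∈ Finset.Icc 1 N, u k)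
        = (M : ℝ)⁻¹ • ∑ m ∈ Finset.Icc 1 M, ∑ k ∈ Finset.Icc 1 N, u k := by
      rw [Finset.sum_const, Nat.card_Icc]
      rw [show M + 1 - 1 = M from by omega]
      rw [← Nat.cast_smul_eq_nsmul ℝ, smul_smul, inv_mul_cancel₀ (ne_of_gt hMR0), one_smul]
    rw [h1, h2, ← smul_sub, ← Finset.sum_sub_distrib]
    rw [norm_smul, Real.norm_eq_abs, abs_inv, Nat.abs_cast]
    have hb : ∀ m ∈ Finset.Icc 1 M,
        ‖(∑ k ∈ Finset.Icc 1 N, u k) - ∑ k ∈ Finset.Icc 1 N, u (k + m)‖ ≤ 2 * M * C := by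
      intro m hm
      rw [norm_sub_rev]
      refine (vdc_shift u C hC N m).trans ?_
      have : (m : ℝ) ≤ (M : ℝ) := by exact_mod_cast (Finset.mem_Icc.mp hm).2
      nlinarith
    calc (M : ℝ)⁻¹ * ‖∑ m ∈ Finset.Icc 1 M,
          ((∑ k ∈ Finset.Icc 1 N, u k) - ∑ k ∈ Finset.Icc 1 N, u (k + m))‖
        ≤ (M : ℝ)⁻¹ * ∑ m ∈ Finset.Icc 1 M, (2 * M * C) := by
          gcongr
          exact norm_sum_le_of_le _ hb
      _ ≤ 2 * M * C := by
          rw [Finset.sum_const, Nat.card_Icc, show M + 1 - 1 = M from by omega,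
            nsmul_eq_mul, ← mul_assoc, inv_mul_cancel₀ (ne_of_gt hMR0), one_mul]
  -- Step B : expansion
  have hQeq : (N : ℝ)⁻¹ * ∑ k ∈ Finset.Icc 1 N, ‖B k‖ ^ 2
      = (M : ℝ)⁻¹ * ((M : ℝ)⁻¹ * ∑ m ∈ Finset.Icc 1 M, ∑ m' ∈ Finset.Icc 1 M, R m m') := by
    have hBnorm : ∀ k, ‖B k‖ ^ 2
        = (M : ℝ)⁻¹ * ((M : ℝ)⁻¹ *
            ∑ m ∈ Finset.Icc 1 M, ∑ m' ∈ Finset.Icc 1 M, ⟪u (k + m), u (k + m')⟫) := by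
      intro k
      rw [← real_inner_self_eq_norm_sq]
      simp only [hBdef, real_inner_smul_left, real_inner_smul_right, sum_inner, inner_sum]
      rw [← Finset.mul_sum, Finset.sum_comm]
    simp only [hBnorm, hRdef, Finset.mul_sum]
    rw [Finset.sum_comm]
    refine Finset.sum_congr rfl fun m _ => ?_
    rw [Finset.sum_comm]
    refine Finset.sum_congr rfl fun m' _ => ?_
    exact Finset.sum_congr rfl fun x _ => by ring
  -- Step C : splitting
  have hRsymm : ∀ m m', R m m' = R m' m := by
    intro m m'
    simp only [hRdef]
    congr 1
    exact Finset.sum_congr rfl fun k _ => real_inner_comm _ _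
  have hsplit : ∑ m ∈ Finset.Icc 1 M, ∑ m' ∈ Finset.Icc 1 M, R m m'
      = (∑ m ∈ Finset.Icc 1 M, R m m)
        + 2 * ∑ m ∈ Finset.Icc 1 M, ∑ m' ∈ Finset.Icc (m + 1) M, R m m' := by
    have hIccIco : ∀ a : ℕ, Finset.Icc a M = Finset.Ico a (M + 1) := fun a =>
      (Finset.Ico_add_one_right_eq_Icc a M).symm
    have inner_split : ∀ m ∈ Finset.Ico 1 (M + 1),
        ∑ m' ∈ Finset.Ico 1 (M + 1), R m m'
          = (∑ m' ∈ Finset.Ico 1 m, R m m')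
            + (R m m + ∑ m' ∈ Finset.Ico (m + 1) (M + 1), R m m') := by
      intro m hm
      obtain ⟨hm1, hm2⟩ := Finset.mem_Ico.mp hm
      rw [← Finset.sum_Ico_consecutive _ hm1 (le_of_lt hm2)]
      congr 1
      exact Finset.sum_eq_sum_Ico_succ_bot hm2 _
    have tri : ∑ m ∈ Finset.Ico 1 (M + 1), ∑ m' ∈ Finset.Ico 1 m, R m m'
        = ∑ m ∈ Finset.Ico 1 (M + 1), ∑ m' ∈ Finset.Ico (m + 1) (M + 1), R m m' := by
      rw [← Finset.sum_Ico_Ico_comm' 1 (M + 1) (fun i j => R j i)]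
      exact Finset.sum_congr rfl fun m _ => Finset.sum_congr rfl fun m' _ => hRsymm m' m
    simp only [hIccIco]
    rw [Finset.sum_congr rfl inner_split, Finset.sum_add_distrib, Finset.sum_add_distrib, tri]
    ring
  have hupper : ∀ m ∈ Finset.Icc 1 M,
      |∑ m' ∈ Finset.Icc (m + 1) M, R m m'|
        ≤ ((M : ℝ) * ε + M₀ * (C * C)) + M * (2 * M * (C * C) * (N : ℝ)⁻¹) := by
    intro m hm
    obtain ⟨hm1, hmM⟩ := Finset.mem_Icc.mp hm
    have hre : ∑ m' ∈ Finset.Icc (m + 1) M, R m m'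
        = ∑ d ∈ Finset.Icc 1 (M - m), R m (m + d) := by
      rw [← Finset.Ico_add_one_right_eq_Icc, ← Finset.Ico_add_one_right_eq_Icc, Finset.sum_Ico_eq_sum_range,
        Finset.sum_Ico_eq_sum_range]
      rw [show M + 1 - (m + 1) = M - m from by omega, show M - m + 1 - 1 = M - m from by omega]
      exact Finset.sum_congr rfl fun i _ => congrArg (R m) (by omega)
    have hsh : ∀ d, |R m (m + d) - γ N d| ≤ 2 * M * (C * C) * (N : ℝ)⁻¹ := by
      intro d
      have e : R m (m + d) - γ N d
          = (N : ℝ)⁻¹ * ((∑ k ∈ Finset.Icc 1 N, ⟪u (k + m), u (k + m + d)⟫)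
              - ∑ k ∈ Finset.Icc 1 N, ⟪u k, u (k + d)⟫) := by
        have e2 : ∑ k ∈ Finset.Icc 1 N, ⟪u (k + m), u (k + (m + d))⟫
            = ∑ k ∈ Finset.Icc 1 N, ⟪u (k + m), u (k + m + d)⟫ :=
          Finset.sum_congr rfl fun k _ => by rw [show k + (m + d) = k + m + d from by omega]
        simp only [hRdef, hγdef]
        rw [e2, mul_sub]
      rw [e, abs_mul, abs_inv, Nat.abs_cast]
      have hv := vdc_shift (fun j => ⟪u j, u (j + d)⟫) (C * C)
        (fun j => by simpa [Real.norm_eq_abs] using hinner j (j + d)) N m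
      rw [Real.norm_eq_abs] at hv
      have hmMR : (m : ℝ) ≤ (M : ℝ) := by exact_mod_cast hmM
      calc (N : ℝ)⁻¹ * |(∑ k ∈ Finset.Icc 1 N, ⟪u (k + m), u (k + m + d)⟫)
              - ∑ k ∈ Finset.Icc 1 N, ⟪u k, u (k + d)⟫|
          ≤ (N : ℝ)⁻¹ * (2 * m * (C * C)) :=
            mul_le_mul_of_nonneg_left (by simpa using hv) hNinv0
        _ = (2 * m * (C * C)) * (N : ℝ)⁻¹ := by ring
        _ ≤ 2 * M * (C * C) * (N : ℝ)⁻¹ := by gcongr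
    have hγsum : ∑ d ∈ Finset.Icc 1 (M - m), γ N d = ((M - m : ℕ) : ℝ) * b (M - m) N := by
      simp only [hbdef]
      rcases Nat.eq_zero_or_pos (M - m) with h0 | hpos
      · simp [h0]
      · rw [← mul_assoc, mul_inv_cancel₀ (by exact_mod_cast hpos.ne' : ((M - m : ℕ) : ℝ) ≠ 0),
          one_mul]
    have hMmM : ((M - m : ℕ) : ℝ) ≤ (M : ℝ) := by exact_mod_cast Nat.sub_le M m
    have hMmnn : (0 : ℝ) ≤ ((M - m : ℕ) : ℝ) := Nat.cast_nonneg _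
    have hbb : ((M - m : ℕ) : ℝ) * |b (M - m) N| ≤ (M : ℝ) * ε + M₀ * (C * C) := by
      rcases le_or_gt M₀ (M - m) with hcase | hcase
      · have hblt : |b (M - m) N| < ε := h1 (M - m) (Finset.mem_Icc.mpr ⟨hcase, Nat.sub_le _ _⟩)
        calc ((M - m : ℕ) : ℝ) * |b (M - m) N| ≤ (M : ℝ) * |b (M - m) N| :=
              mul_le_mul_of_nonneg_right hMmM (abs_nonneg _)
          _ ≤ (M : ℝ) * ε := mul_le_mul_of_nonneg_left hblt.le hMR0.le
          _ ≤ (M : ℝ) * ε + M₀ * (C * C) :=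
              le_add_of_nonneg_right (mul_nonneg (Nat.cast_nonneg _) hCC0)
      · have hMmM₀ : ((M - m : ℕ) : ℝ) ≤ (M₀ : ℝ) := by exact_mod_cast hcase.le
        calc ((M - m : ℕ) : ℝ) * |b (M - m) N| ≤ (M₀ : ℝ) * (C * C) :=
              mul_le_mul hMmM₀ (hbbd _ _) (abs_nonneg _) (Nat.cast_nonneg _)
          _ ≤ (M : ℝ) * ε + M₀ * (C * C) := le_add_of_nonneg_left (mul_nonneg hMR0.le hε.le)
    have hcard : (Finset.Icc 1 (M - m)).card = M - m := by rw [Nat.card_Icc]; omega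
    have hsum_split : ∑ d ∈ Finset.Icc 1 (M - m), R m (m + d)
        = (∑ d ∈ Finset.Icc 1 (M - m), (R m (m + d) - γ N d))
          + ∑ d ∈ Finset.Icc 1 (M - m), γ N d := by
      rw [← Finset.sum_add_distrib]
      exact Finset.sum_congr rfl fun d _ => by ring
    calc |∑ m' ∈ Finset.Icc (m + 1) M, R m m'|
        = |(∑ d ∈ Finset.Icc 1 (M - m), (R m (m + d) - γ N d))
            + ∑ d ∈ Finset.Icc 1 (M - m), γ N d| := by rw [hre, hsum_split]
      _ ≤ |∑ d ∈ Finset.Icc 1 (M - m), (R m (m + d) - γ N d)|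
            + |∑ d ∈ Finset.Icc 1 (M - m), γ N d| := abs_add_le _ _
      _ ≤ (∑ d ∈ Finset.Icc 1 (M - m), (2 * M * (C * C) * (N : ℝ)⁻¹))
            + ((M - m : ℕ) : ℝ) * |b (M - m) N| := by
          refine add_le_add ?_ ?_
          · exact (Finset.abs_sum_le_sum_abs _ _).trans (Finset.sum_le_sum fun d _ => hsh d)
          · rw [hγsum, abs_mul, Nat.abs_cast]
      _ ≤ (M : ℝ) * (2 * M * (C * C) * (N : ℝ)⁻¹) + ((M : ℝ) * ε + M₀ * (C * C)) := by
          refine add_le_add ?_ hbb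
          rw [Finset.sum_const, hcard, nsmul_eq_mul]
          exact mul_le_mul_of_nonneg_right hMmM (by positivity)
      _ = ((M : ℝ) * ε + M₀ * (C * C)) + M * (2 * M * (C * C) * (N : ℝ)⁻¹) := by ring
  have hD : |∑ m ∈ Finset.Icc 1 M, R m m| ≤ M * (C * C) := by
    calc |∑ m ∈ Finset.Icc 1 M, R m m| ≤ ∑ m ∈ Finset.Icc 1 M, |R m m| :=
          Finset.abs_sum_le_sum_abs _ _
      _ ≤ ∑ m ∈ Finset.Icc 1 M, (C * C) := Finset.sum_le_sum fun m _ => by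
          simp only [hRdef]
          exact vdc_avg (fun k => ⟪u (k + m), u (k + m)⟫) _ hCC0 (fun k => hinner _ _) N
      _ = M * (C * C) := by
          rw [Finset.sum_const, Nat.card_Icc, show M + 1 - 1 = M from by omega, nsmul_eq_mul]
  have hQbound : (N : ℝ)⁻¹ * ∑ k ∈ Finset.Icc 1 N, ‖B k‖ ^ 2
      ≤ 4 * ε + 4 * M * (C * C) * (N : ℝ)⁻¹ := by
    rw [hQeq, hsplit]
    have hUb : (∑ m ∈ Finset.Icc 1 M, ∑ m' ∈ Finset.Icc (m + 1) M, R m m')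
        ≤ M * (((M : ℝ) * ε + M₀ * (C * C)) + M * (2 * M * (C * C) * (N : ℝ)⁻¹)) := by
      refine le_of_abs_le ?_
      calc |∑ m ∈ Finset.Icc 1 M, ∑ m' ∈ Finset.Icc (m + 1) M, R m m'|
          ≤ ∑ m ∈ Finset.Icc 1 M, |∑ m' ∈ Finset.Icc (m + 1) M, R m m'| :=
            Finset.abs_sum_le_sum_abs _ _
        _ ≤ ∑ m ∈ Finset.Icc 1 M, (((M : ℝ) * ε + M₀ * (C * C))
              + M * (2 * M * (C * C) * (N : ℝ)⁻¹)) := Finset.sum_le_sum hupper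
        _ = M * (((M : ℝ) * ε + M₀ * (C * C)) + M * (2 * M * (C * C) * (N : ℝ)⁻¹)) := by
            rw [Finset.sum_const, Nat.card_Icc, show M + 1 - 1 = M from by omega, nsmul_eq_mul]
    have hDb : (∑ m ∈ Finset.Icc 1 M, R m m) ≤ M * (C * C) := le_of_abs_le hD
    rw [inv_mul_le_iff₀ hMR0, inv_mul_le_iff₀ hMR0]
    nlinarith [mul_le_mul_of_nonneg_left hc hMR0.le, mul_le_mul_of_nonneg_left hd hMR0.le,
      mul_nonneg (mul_nonneg hMR0.le hCC0) hNinv0]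
  -- Step D : conclusion
  have hCS : ((N : ℝ)⁻¹ * ∑ k ∈ Finset.Icc 1 N, ‖B k‖) ^ 2
      ≤ (N : ℝ)⁻¹ * ∑ k ∈ Finset.Icc 1 N, ‖B k‖ ^ 2 := by
    have hcs := sq_sum_le_card_mul_sum_sq (s := Finset.Icc 1 N) (f := fun k => ‖B k‖)
    rw [Nat.card_Icc, show N + 1 - 1 = N from by omega] at hcs
    rw [mul_pow]
    calc ((N : ℝ)⁻¹) ^ 2 * (∑ k ∈ Finset.Icc 1 N, ‖B k‖) ^ 2
        ≤ ((N : ℝ)⁻¹) ^ 2 * ((N : ℝ) * ∑ k ∈ Finset.Icc 1 N, ‖B k‖ ^ 2) :=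
          mul_le_mul_of_nonneg_left (by exact_mod_cast hcs) (by positivity)
      _ = (N : ℝ)⁻¹ * ∑ k ∈ Finset.Icc 1 N, ‖B k‖ ^ 2 := by
          field_simp
  have hN8 : 4 * M * (C * C) * (N : ℝ)⁻¹ ≤ ε' ^ 2 / 8 := by
    have h2' := (div_le_iff₀ (by positivity : (0 : ℝ) < ε' ^ 2 / 8)).mp h2
    calc 4 * M * (C * C) * (N : ℝ)⁻¹ ≤ ((N : ℝ) * (ε' ^ 2 / 8)) * (N : ℝ)⁻¹ :=
          mul_le_mul_of_nonneg_right h2' hNinv0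
      _ = ε' ^ 2 / 8 := by
          rw [mul_comm, ← mul_assoc, inv_mul_cancel₀ (ne_of_gt hNR0), one_mul]
  have hN4 : 2 * M * C * (N : ℝ)⁻¹ ≤ ε' / 4 := by
    have h3' := (div_le_iff₀ (by positivity : (0 : ℝ) < ε' / 4)).mp h3
    calc 2 * M * C * (N : ℝ)⁻¹ ≤ ((N : ℝ) * (ε' / 4)) * (N : ℝ)⁻¹ :=
          mul_le_mul_of_nonneg_right h3' hNinv0
      _ = ε' / 4 := by
          rw [mul_comm, ← mul_assoc, inv_mul_cancel₀ (ne_of_gt hNR0), one_mul]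
  have hQ2 : (N : ℝ)⁻¹ * ∑ k ∈ Finset.Icc 1 N, ‖B k‖ ^ 2 ≤ (ε' / 2) ^ 2 := by
    refine hQbound.trans ?_
    have h4ε : 4 * ε = ε' ^ 2 / 8 := by rw [hεdef]; ring
    calc 4 * ε + 4 * M * (C * C) * (N : ℝ)⁻¹ ≤ ε' ^ 2 / 8 + ε' ^ 2 / 8 :=
          add_le_add (le_of_eq h4ε) hN8
      _ = (ε' / 2) ^ 2 := by ring
  have ha0 : 0 ≤ (N : ℝ)⁻¹ * ∑ k ∈ Finset.Icc 1 N, ‖B k‖ := by positivity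
  have ha : (N : ℝ)⁻¹ * ∑ k ∈ Finset.Icc 1 N, ‖B k‖ ≤ ε' / 2 := by
    have hs := Real.sqrt_le_sqrt (hCS.trans hQ2)
    rwa [Real.sqrt_sq ha0, Real.sqrt_sq (by positivity)] at hs
  have hAle : ‖(N : ℝ)⁻¹ • ∑ k ∈ Finset.Icc 1 N, u k‖
      ≤ (N : ℝ)⁻¹ * ∑ k ∈ Finset.Icc 1 N, ‖B k‖ + 2 * M * C * (N : ℝ)⁻¹ := by
    rw [norm_smul, Real.norm_eq_abs, abs_inv, Nat.abs_cast]
    have hS : ‖∑ k ∈ Finset.Icc 1 N, u k‖ ≤ (∑ k ∈ Finset.Icc 1 N, ‖B k‖) + 2 * M * C := by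
      calc ‖∑ k ∈ Finset.Icc 1 N, u k‖
          = ‖(∑ k ∈ Finset.Icc 1 N, B k)
              + ((∑ k ∈ Finset.Icc 1 N, u k) - ∑ k ∈ Finset.Icc 1 N, B k)‖ := by
            congr 1
            abel
        _ ≤ ‖∑ k ∈ Finset.Icc 1 N, B k‖
              + ‖(∑ k ∈ Finset.Icc 1 N, u k) - ∑ k ∈ Finset.Icc 1 N, B k‖ := norm_add_le _ _
        _ ≤ (∑ k ∈ Finset.Icc 1 N, ‖B k‖) + 2 * M * C :=
            add_le_add (norm_sum_le _ _) hSdiff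
    calc (N : ℝ)⁻¹ * ‖∑ k ∈ Finset.Icc 1 N, u k‖
        ≤ (N : ℝ)⁻¹ * ((∑ k ∈ Finset.Icc 1 N, ‖B k‖) + 2 * M * C) := by gcongr
      _ = (N : ℝ)⁻¹ * ∑ k ∈ Finset.Icc 1 N, ‖B k‖ + 2 * M * C * (N : ℝ)⁻¹ := by ring
  calc ‖(N : ℝ)⁻¹ • ∑ n ∈ Finset.Icc 1 N, u n‖
      ≤ (N : ℝ)⁻¹ * ∑ k ∈ Finset.Icc 1 N, ‖B k‖ + 2 * M * C * (N : ℝ)⁻¹ := hAle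
    _ ≤ ε' / 2 + ε' / 4 := add_le_add ha hN4
    _ < ε' := by linarith
end

section
/- Suppose the infinitary Density Hales-Jewett theorem holds: for every δ > 0, every Borel probability measure μ on {0,1}^{[k]^*} satisfying μ{x : x_w = 1} ≥ δ for all words w ∈ [k]^* gives positive measure to {x : x_{φ(i)} = 1 for all i ∈ [k]} for some combinatorial line φ : [k] ↪ [k]^*. Then the finitary Density Hales-Jewett theorem holds: for every δ > 0 and k ≥ 1 there is N₀ such that for all N ≥ N₀, every A ⊆ [k]^N with |A| ≥ δk^N contains a combinatorial line. -/
open MeasureTheory ENNReal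

/-- The type of finite words of positive length over the alphabet `[k]`,
modelling `[k]^* = ⋃_{N ≥ 1} [k]^N`. -/
def DHJWord (k : ℕ) : Type := Σ n : ℕ, (Fin (n + 1) → Fin k)

/-- The word of the combinatorial line determined by a template
`t : Fin (n+1) → Option (Fin k)` (with `none` marking the wildcard set) at
letter `i ∈ [k]`. -/
def DHJLineWord (k n : ℕ) (t : Fin (n + 1) → Option (Fin k)) (i : Fin k) :
    DHJWord k := ⟨n, fun m => (t m).getD i⟩

section Aux

variable {k : ℕ}

/-- `A` contains a combinatorial line. -/
def DHJHasLine {N : ℕ} (A : Finset (Fin N → Fin k)) : Prop :=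
  ∃ t : Fin N → Option (Fin k), (∃ m, t m = none) ∧
    ∀ i : Fin k, (fun m => (t m).getD i) ∈ A

/-- The slice of `A` over the prefix `w`. -/
def DHJSlice {m L : ℕ} (A : Finset (Fin (m + L) → Fin k)) (w : Fin m → Fin k) :
    Finset (Fin L → Fin k) :=
  Finset.univ.filter fun v => Fin.append w v ∈ A

lemma DHJappend_getD {a b : ℕ} (t₁ : Fin a → Option (Fin k))
    (t₂ : Fin b → Option (Fin k)) (i : Fin k) (j : Fin (a + b)) :
    (Fin.append t₁ t₂ j).getD i
      = Fin.append (fun m => (t₁ m).getD i) (fun m => (t₂ m).getD i) j := by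
  induction j using Fin.addCases with
  | left j => simp [Fin.append_left]
  | right j => simp [Fin.append_right]

lemma DHJHasLine_of_slice {m L : ℕ} (A : Finset (Fin (m + L) → Fin k))
    (w : Fin m → Fin k) (h : DHJHasLine (DHJSlice A w)) : DHJHasLine A := by
  obtain ⟨t, ⟨j0, hj0⟩, ht⟩ := h
  refine ⟨Fin.append (fun x => some (w x)) t,
    ⟨Fin.natAdd m j0, by simp [Fin.append_right, hj0]⟩, ?_⟩
  intro i
  have hmem := ht i
  simp only [DHJSlice, Finset.mem_filter, Finset.mem_univ, true_and] at hmem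
  have hfun : (fun j => (Fin.append (fun x => some (w x)) t j).getD i)
      = Fin.append w (fun m => (t m).getD i) := by
    funext j
    rw [DHJappend_getD]
    simp only [Option.getD_some]
  rw [hfun]
  exact hmem

lemma DHJHasLine_of_fill {m L : ℕ} (A : Finset (Fin (m + L) → Fin k))
    (t : Fin m → Option (Fin k)) (v : Fin L → Fin k)
    (hnone : ∃ j, t j = none)
    (h : ∀ i : Fin k, Fin.append (fun x => (t x).getD i) v ∈ A) : DHJHasLine A := by
  obtain ⟨j0, hj0⟩ := hnone
  refine ⟨Fin.append t (fun x => some (v x)),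
    ⟨Fin.castAdd L j0, by simp [Fin.append_left, hj0]⟩, ?_⟩
  intro i
  have hfun : (fun j => (Fin.append t (fun x => some (v x)) j).getD i)
      = Fin.append (fun x => (t x).getD i) v := by
    funext j
    rw [DHJappend_getD]
    simp only [Option.getD_some]
  rw [hfun]
  exact h i

lemma DHJslice_sum {m L : ℕ} (A : Finset (Fin (m + L) → Fin k)) :
    ∑ w : Fin m → Fin k, (DHJSlice A w).card = A.card := by
  classical
  rw [Finset.card_eq_sum_card_fiberwise
    (f := fun a (j : Fin m) => a (Fin.castAdd L j)) (t := Finset.univ)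
    (fun x _ => Finset.mem_univ _)]
  refine Finset.sum_congr rfl fun w _ => ?_
  refine Finset.card_bij (fun v _ => Fin.append w v) ?_ ?_ ?_
  · intro v hv
    simp only [DHJSlice, Finset.mem_filter, Finset.mem_univ, true_and] at hv
    simp only [Finset.mem_filter]
    refine ⟨hv, ?_⟩
    funext j
    simp [Fin.append_left]
  · intro a ha b hb h
    funext j
    have := congrFun h (Fin.natAdd m j)
    simpa [Fin.append_right] using this
  · intro a ha
    simp only [Finset.mem_filter] at ha
    obtain ⟨haA, hw⟩ := ha
    have hrec : Fin.append w (fun j => a (Fin.natAdd m j)) = a := by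
      funext x
      induction x using Fin.addCases with
      | left j => rw [Fin.append_left]; exact (congrFun hw j).symm ▸ rfl
      | right j => rw [Fin.append_right]
    refine ⟨fun j => a (Fin.natAdd m j), ?_, hrec⟩
    simp only [DHJSlice, Finset.mem_filter, Finset.mem_univ, true_and, hrec]
    exact haA

end Aux

section Haar

/-- For an add-left-invariant probability measure on a countable product of finite
groups, the distribution of each coordinate is uniform. -/
lemma DHJhaar_block {kk : ℕ} {L : ℕ → ℕ}
    (μ : Measure (∀ n : ℕ, Fin (L n) → Fin (kk + 1))) [IsProbabilityMeasure μ]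
    [μ.IsAddLeftInvariant] (n : ℕ) (T : Finset (Fin (L n) → Fin (kk + 1))) :
    μ {ω | ω n ∈ T} = (T.card : ℝ≥0∞) * ((((kk + 1) ^ L n : ℕ)) : ℝ≥0∞)⁻¹ := by
  classical
  have hmeas : ∀ v : Fin (L n) → Fin (kk + 1), MeasurableSet {ω : ∀ j : ℕ, Fin (L j) → Fin (kk + 1) | ω n = v} := by
    intro v
    have hp : Measurable (fun ω : ∀ j : ℕ, Fin (L j) → Fin (kk + 1) => ω n) :=
      measurable_pi_apply n
    exact hp (measurableSet_singleton v)
  set c := μ {ω : ∀ j : ℕ, Fin (L j) → Fin (kk + 1) | ω n = 0} with hc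
  have hconst : ∀ v : Fin (L n) → Fin (kk + 1), μ {ω : ∀ j : ℕ, Fin (L j) → Fin (kk + 1) | ω n = v} = c := by
    intro v
    have key := measure_preimage_add μ (Function.update (0 : ∀ j : ℕ, Fin (L j) → Fin (kk + 1)) n (-v)) {ω : ∀ j : ℕ, Fin (L j) → Fin (kk + 1) | ω n = 0}
    have hset : ((Function.update (0 : ∀ j : ℕ, Fin (L j) → Fin (kk + 1)) n (-v) + ·) ⁻¹' {ω : ∀ j : ℕ, Fin (L j) → Fin (kk + 1) | ω n = 0})
        = {ω : ∀ j : ℕ, Fin (L j) → Fin (kk + 1) | ω n = v} := by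
      ext ω
      simp only [Set.mem_preimage, Set.mem_setOf_eq, Pi.add_apply, Function.update_self]
      rw [neg_add_eq_zero]
      exact comm
    rw [hset] at key
    exact key
  have hdisj : ∀ s : Finset (Fin (L n) → Fin (kk + 1)),
      μ {ω : ∀ j : ℕ, Fin (L j) → Fin (kk + 1) | ω n ∈ s} = s.card • c := by
    intro s
    have hU : {ω : ∀ j : ℕ, Fin (L j) → Fin (kk + 1) | ω n ∈ s} = ⋃ v ∈ s, {ω : ∀ j : ℕ, Fin (L j) → Fin (kk + 1) | ω n = v} := by
      ext ω; simp
    have hd : Set.PairwiseDisjoint (↑s : Set (Fin (L n) → Fin (kk + 1)))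
        (fun v => {ω : ∀ j : ℕ, Fin (L j) → Fin (kk + 1) | ω n = v}) := by
      intro a _ b _ hab
      refine Set.disjoint_left.mpr fun ω h1 h2 => hab ?_
      exact h1.symm.trans h2
    rw [hU, measure_biUnion_finset hd (fun v _ => hmeas v)]
    simp only [hconst, Finset.sum_const]
  have huniv : (Finset.univ : Finset (Fin (L n) → Fin (kk + 1))).card • c = 1 := by
    rw [← hdisj]
    have : {ω : ∀ j : ℕ, Fin (L j) → Fin (kk + 1) | ω n ∈ (Finset.univ : Finset (Fin (L n) → Fin (kk + 1)))}
        = Set.univ := by ext ω; simp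
    rw [this, measure_univ]
  have hcard : (Finset.univ : Finset (Fin (L n) → Fin (kk + 1))).card
      = (kk + 1) ^ L n := by
    simp [Finset.card_univ, Fintype.card_fun]
  rw [hcard] at huniv
  have hcval : c = ((((kk + 1) ^ L n : ℕ)) : ℝ≥0∞)⁻¹ := by
    have hne : ((((kk + 1) ^ L n : ℕ)) : ℝ≥0∞) ≠ 0 := by
      simp [pow_ne_zero]
    have hnetop : ((((kk + 1) ^ L n : ℕ)) : ℝ≥0∞) ≠ ⊤ := by simp
    have hmul : ((((kk + 1) ^ L n : ℕ)) : ℝ≥0∞) * c = 1 := by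
      rw [← huniv, nsmul_eq_mul]
    calc c = (((((kk + 1) ^ L n : ℕ)) : ℝ≥0∞)⁻¹ * ((((kk + 1) ^ L n : ℕ)) : ℝ≥0∞)) * c := by
            rw [ENNReal.inv_mul_cancel hne hnetop, one_mul]
      _ = ((((kk + 1) ^ L n : ℕ)) : ℝ≥0∞)⁻¹ * (((((kk + 1) ^ L n : ℕ)) : ℝ≥0∞) * c) :=
            mul_assoc _ _ _
      _ = ((((kk + 1) ^ L n : ℕ)) : ℝ≥0∞)⁻¹ := by rw [hmul, mul_one]
  rw [hdisj, hcval, nsmul_eq_mul]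

end Haar

/-- The infinitary Density Hales–Jewett theorem implies the finitary one: if every
Borel probability measure on `{0,1}^{[k]^*}` whose every one-coordinate marginal
gives mass at least `δ` to `1` charges the event that some combinatorial line is
monochromatically `1`, then any sufficiently high-dimensional subset of `[k]^N` of
density at least `δ` contains a combinatorial line. -/
theorem finitary_DHJ_of_infinitary_DHJ (k : ℕ) (hk : 1 ≤ k)
    (hinf : ∀ δ : ℝ, 0 < δ → ∀ μ : Measure (DHJWord k → Bool), IsProbabilityMeasure μ →
      (∀ w : DHJWord k, ENNReal.ofReal δ ≤ μ {x | x w = true}) →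
      ∃ (n : ℕ) (t : Fin (n + 1) → Option (Fin k)), (∃ m, t m = none) ∧
        0 < μ {x | ∀ i : Fin k, x (DHJLineWord k n t i) = true}) :
    ∀ δ : ℝ, 0 < δ → ∃ N₀ : ℕ, ∀ N, N₀ ≤ N →
      ∀ A : Finset (Fin N → Fin k), δ * (k : ℝ) ^ N ≤ (A.card : ℝ) →
        ∃ t : Fin N → Option (Fin k), (∃ m, t m = none) ∧
          ∀ i : Fin k, (fun m => (t m).getD i) ∈ A := by
  classical
  obtain ⟨kk, rfl⟩ : ∃ kk, k = kk + 1 := ⟨k - 1, by omega⟩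
  intro δ hδ
  by_contra hcon
  push_neg at hcon
  have hkR : (0:ℝ) < ((kk + 1 : ℕ) : ℝ) := by positivity
  set S : Set ℝ := {d | ∀ N₀ : ℕ, ∃ N, N₀ ≤ N ∧ ∃ A : Finset (Fin N → Fin (kk + 1)),
      d * ((kk + 1 : ℕ) : ℝ) ^ N ≤ (A.card : ℝ) ∧ ¬ DHJHasLine A} with hSdef
  have hδS : δ ∈ S := by
    intro N₀
    obtain ⟨N, hN, A, h1, h2⟩ := hcon N₀
    refine ⟨N, hN, A, by exact_mod_cast h1, ?_⟩
    rintro ⟨t, hnone, hall⟩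
    obtain ⟨i, hi⟩ := h2 t hnone
    exact hi (hall i)
  have hSne : S.Nonempty := ⟨δ, hδS⟩
  have hbdd : BddAbove S := by
    refine ⟨1, fun d hd => ?_⟩
    obtain ⟨N, hN, A, h1, h2⟩ := hd 0
    have hcu : ((Finset.univ : Finset (Fin N → Fin (kk + 1))).card : ℝ)
        = ((kk + 1 : ℕ) : ℝ) ^ N := by
      rw [Finset.card_univ]
      rw [Fintype.card_fun]
      push_cast
      simp
    have hcard : (A.card : ℝ) ≤ ((kk + 1 : ℕ) : ℝ) ^ N := by
      rw [← hcu]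
      exact_mod_cast Finset.card_le_univ A
    have hpow : (0:ℝ) < ((kk + 1 : ℕ) : ℝ) ^ N := by positivity
    nlinarith [le_trans h1 hcard]
  set δ₀ := sSup S with hδ₀def
  have hδδ₀ : δ ≤ δ₀ := le_csSup hbdd hδS
  have hδ₀pos : 0 < δ₀ := lt_of_lt_of_le hδ hδδ₀
  have hub : ∀ ε : ℝ, 0 < ε → ∃ N₁ : ℕ, ∀ N, N₁ ≤ N →
      ∀ A : Finset (Fin N → Fin (kk + 1)), ¬ DHJHasLine A →
      (A.card : ℝ) < (δ₀ + ε) * ((kk + 1 : ℕ) : ℝ) ^ N := by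
    intro ε hε
    have hnot : (δ₀ + ε) ∉ S := fun h => absurd (le_csSup hbdd h) (by linarith)
    rw [hSdef, Set.mem_setOf_eq] at hnot
    push_neg at hnot
    obtain ⟨N₁, hN₁⟩ := hnot
    refine ⟨N₁, fun N hN A hA => ?_⟩
    by_contra hge
    push_neg at hge
    exact hA (hN₁ N hN A hge)
  have hlow : ∀ ε : ℝ, 0 < ε → ∀ N₀ : ℕ, ∃ N, N₀ ≤ N ∧
      ∃ A : Finset (Fin N → Fin (kk + 1)),
        (δ₀ - ε) * ((kk + 1 : ℕ) : ℝ) ^ N ≤ (A.card : ℝ) ∧ ¬ DHJHasLine A := by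
    intro ε hε N₀
    obtain ⟨d, hdS, hdgt⟩ := exists_lt_of_lt_csSup hSne (show δ₀ - ε < δ₀ by linarith)
    obtain ⟨N, hN, A, h1, h2⟩ := hdS N₀
    refine ⟨N, hN, A, le_trans ?_ h1, h2⟩
    nlinarith [pow_pos hkR N]
  have hslice : ∀ m : ℕ, ∃ L : ℕ, ∃ A : Finset (Fin ((m + 1) + L) → Fin (kk + 1)),
      ¬ DHJHasLine A ∧ ∀ w : Fin (m + 1) → Fin (kk + 1),
        δ / 2 * ((kk + 1 : ℕ) : ℝ) ^ L < ((DHJSlice A w).card : ℝ) := by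
    intro m
    have hpm : (0:ℝ) < ((kk + 1 : ℕ) : ℝ) ^ (m + 1) := by positivity
    set ε := δ₀ / (4 * ((kk + 1 : ℕ) : ℝ) ^ (m + 1)) with hεdef
    have hε : 0 < ε := div_pos hδ₀pos (by positivity)
    obtain ⟨N₁, hN₁⟩ := hub ε hε
    obtain ⟨N, hN, A, hA1, hA2⟩ := hlow ε hε ((m + 1) + N₁)
    obtain ⟨L, rfl⟩ : ∃ L, N = (m + 1) + L := ⟨N - (m + 1), by omega⟩
    have hL : N₁ ≤ L := by omega
    refine ⟨L, A, hA2, fun w₀ => ?_⟩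
    have hpL : (0:ℝ) < ((kk + 1 : ℕ) : ℝ) ^ L := by positivity
    have hup : ∀ w : Fin (m + 1) → Fin (kk + 1),
        ((DHJSlice A w).card : ℝ) < (δ₀ + ε) * ((kk + 1 : ℕ) : ℝ) ^ L :=
      fun w => hN₁ L hL _ (fun h => hA2 (DHJHasLine_of_slice A w h))
    have hsum : ∑ w : Fin (m + 1) → Fin (kk + 1), ((DHJSlice A w).card : ℝ)
        = (A.card : ℝ) := by
      exact_mod_cast congrArg (Nat.cast : ℕ → ℝ) (DHJslice_sum A)
    have hcerase : ((Finset.univ.erase w₀).card : ℝ)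
        = ((kk + 1 : ℕ) : ℝ) ^ (m + 1) - 1 := by
      rw [Finset.card_erase_of_mem (Finset.mem_univ w₀), Finset.card_univ, Fintype.card_fun]
      have h1le : 1 ≤ (kk + 1) ^ (m + 1) := Nat.one_le_pow _ _ (by omega)
      push_cast [Nat.cast_sub h1le]
      simp
    have herase : ∑ w ∈ Finset.univ.erase w₀, ((DHJSlice A w).card : ℝ)
        ≤ (((kk + 1 : ℕ) : ℝ) ^ (m + 1) - 1) * ((δ₀ + ε) * ((kk + 1 : ℕ) : ℝ) ^ L) := by
      have hb : ∀ w ∈ Finset.univ.erase w₀,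
          ((DHJSlice A w).card : ℝ) ≤ (δ₀ + ε) * ((kk + 1 : ℕ) : ℝ) ^ L :=
        fun w _ => (hup w).le
      calc ∑ w ∈ Finset.univ.erase w₀, ((DHJSlice A w).card : ℝ)
          ≤ (Finset.univ.erase w₀).card • ((δ₀ + ε) * ((kk + 1 : ℕ) : ℝ) ^ L) :=
            Finset.sum_le_card_nsmul _ _ _ hb
        _ = ((Finset.univ.erase w₀).card : ℝ) * ((δ₀ + ε) * ((kk + 1 : ℕ) : ℝ) ^ L) := by
            rw [nsmul_eq_mul]
        _ = (((kk + 1 : ℕ) : ℝ) ^ (m + 1) - 1) * ((δ₀ + ε) * ((kk + 1 : ℕ) : ℝ) ^ L) := by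
            rw [hcerase]
    have hw0 : ((DHJSlice A w₀).card : ℝ)
        = (A.card : ℝ) - ∑ w ∈ Finset.univ.erase w₀, ((DHJSlice A w).card : ℝ) := by
      have hsplit := Finset.sum_erase_add Finset.univ
        (fun w => ((DHJSlice A w).card : ℝ)) (Finset.mem_univ w₀)
      rw [← hsum]
      linarith [hsplit]
    have hεk : ε * ((kk + 1 : ℕ) : ℝ) ^ (m + 1) = δ₀ / 4 := by
      rw [hεdef]
      field_simp
    have hpowadd : ((kk + 1 : ℕ) : ℝ) ^ ((m + 1) + L)
        = ((kk + 1 : ℕ) : ℝ) ^ (m + 1) * ((kk + 1 : ℕ) : ℝ) ^ L := pow_add _ _ _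
    rw [hpowadd] at hA1
    have key : (δ₀ - ε) * (((kk + 1 : ℕ) : ℝ) ^ (m + 1) * ((kk + 1 : ℕ) : ℝ) ^ L)
        - (((kk + 1 : ℕ) : ℝ) ^ (m + 1) - 1) * ((δ₀ + ε) * ((kk + 1 : ℕ) : ℝ) ^ L)
        = (δ₀ + ε - 2 * (ε * ((kk + 1 : ℕ) : ℝ) ^ (m + 1))) * ((kk + 1 : ℕ) : ℝ) ^ L := by
      ring
    rw [hεk] at key
    have hlt : δ / 2 < δ₀ + ε - 2 * (δ₀ / 4) := by linarith
    have := mul_lt_mul_of_pos_right hlt hpL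
    linarith [hA1, herase, hw0, key, this]
  choose L AA hline hdense using hslice
  haveI : IsTopologicalAddGroup (Fin (kk + 1)) := ⟨⟩
  set μh : Measure (∀ n : ℕ, Fin (L n) → Fin (kk + 1)) := Measure.addHaar with hμh
  have hfintop : μh Set.univ ≠ ⊤ := measure_ne_top μh _
  have hpos0 : μh Set.univ ≠ 0 := by
    have hne : (Set.univ : Set (∀ n : ℕ, Fin (L n) → Fin (kk + 1))).Nonempty :=
      Set.univ_nonempty
    exact (isOpen_univ.measure_pos μh hne).ne'
  set μ₀ := (μh Set.univ)⁻¹ • μh with hμ₀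
  haveI hP0 : IsProbabilityMeasure μ₀ := by
    constructor
    rw [hμ₀, Measure.smul_apply, smul_eq_mul]
    exact ENNReal.inv_mul_cancel hpos0 hfintop
  haveI hInv : μ₀.IsAddLeftInvariant := by
    rw [hμ₀]
    infer_instance
  set X : (∀ n : ℕ, Fin (L n) → Fin (kk + 1)) → (DHJWord (kk + 1) → Bool) :=
    fun ω w => decide (Fin.append w.2 (ω w.1) ∈ AA w.1) with hXdef
  have hXm : Measurable X := by
    apply measurable_pi_lambda
    intro w
    have h1 : Measurable (fun ω : ∀ n : ℕ, Fin (L n) → Fin (kk + 1) => ω w.1) :=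
      measurable_pi_apply _
    have h2 : Measurable (fun v : Fin (L w.1) → Fin (kk + 1) =>
        decide (Fin.append w.2 v ∈ AA w.1)) := Measurable.of_discrete
    exact h2.comp h1
  have hmarg : ∀ w : DHJWord (kk + 1),
      ENNReal.ofReal (δ / 2) ≤ (Measure.map X μ₀) {x | x w = true} := by
    rintro ⟨n, f⟩
    have hmset : MeasurableSet {x : DHJWord (kk + 1) → Bool | x ⟨n, f⟩ = true} := by
      have hp : Measurable (fun x : DHJWord (kk + 1) → Bool => x ⟨n, f⟩) :=
        measurable_pi_apply _
      exact hp (measurableSet_singleton true)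
    rw [Measure.map_apply hXm hmset]
    have hpre : X ⁻¹' {x | x ⟨n, f⟩ = true} = {ω | ω n ∈ DHJSlice (AA n) f} := by
      ext ω
      simp [hXdef, DHJSlice]
    rw [hpre, DHJhaar_block μ₀ n (DHJSlice (AA n) f)]
    have hareal : (0:ℝ) < (((kk + 1) ^ L n : ℕ) : ℝ) := by positivity
    have hd := hdense n f
    have hdc : δ / 2 * (((kk + 1) ^ L n : ℕ) : ℝ) ≤ ((DHJSlice (AA n) f).card : ℝ) := by
      push_cast
      push_cast at hd
      exact hd.le
    have h1 : ENNReal.ofReal (δ / 2)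
        ≤ ENNReal.ofReal (((DHJSlice (AA n) f).card : ℝ) / (((kk + 1) ^ L n : ℕ) : ℝ)) := by
      apply ENNReal.ofReal_le_ofReal
      rw [le_div_iff₀ hareal]
      exact hdc
    have h2 : ENNReal.ofReal (((DHJSlice (AA n) f).card : ℝ) / (((kk + 1) ^ L n : ℕ) : ℝ))
        = ((DHJSlice (AA n) f).card : ℝ≥0∞) * ((((kk + 1) ^ L n : ℕ)) : ℝ≥0∞)⁻¹ := by
      rw [ENNReal.ofReal_div_of_pos hareal, ENNReal.ofReal_natCast, ENNReal.ofReal_natCast,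
        div_eq_mul_inv]
    rw [h2] at h1
    exact h1
  obtain ⟨n, t, hnone, hposline⟩ := hinf (δ / 2) (half_pos hδ) (Measure.map X μ₀)
    (Measure.isProbabilityMeasure_map hXm.aemeasurable) hmarg
  have hEm : MeasurableSet {x : DHJWord (kk + 1) → Bool |
      ∀ i : Fin (kk + 1), x (DHJLineWord (kk + 1) n t i) = true} := by
    have hset : {x : DHJWord (kk + 1) → Bool |
        ∀ i : Fin (kk + 1), x (DHJLineWord (kk + 1) n t i) = true}
        = ⋂ i : Fin (kk + 1), {x | x (DHJLineWord (kk + 1) n t i) = true} := by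
      ext x; simp
    rw [hset]
    refine MeasurableSet.iInter fun i => ?_
    have hp : Measurable (fun x : DHJWord (kk + 1) → Bool => x (DHJLineWord (kk + 1) n t i)) :=
      measurable_pi_apply _
    exact hp (measurableSet_singleton true)
  rw [Measure.map_apply hXm hEm] at hposline
  have hempty : X ⁻¹' {x : DHJWord (kk + 1) → Bool |
      ∀ i : Fin (kk + 1), x (DHJLineWord (kk + 1) n t i) = true} = ∅ := by
    ext ω
    simp only [Set.mem_preimage, Set.mem_setOf_eq, Set.mem_empty_iff_false, iff_false]
    intro hall
    apply hline n
    apply DHJHasLine_of_fill (AA n) t (ω n) hnone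
    intro i
    have hi := hall i
    simpa [hXdef, DHJLineWord] using hi
  rw [hempty] at hposline
  simp at hposline
end
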